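/- Let T be a tree of order n obtained from the path P_{2k} = v_1v_2...v_{2k} (k ≥ 2) by attaching n−2k pendent vertices to vertices of the path other than v_2, with at most (n−2k+1)/k of them attached to v_1. Then μ(T) < k + 1/2 + 4(k−1)/k². -/

import Mathlib

open SimpleGraph Finset

/-- The Wiener index: sum of distances over unordered pairs (as a rational). -/
noncomputable def wiener {V : Type*} [Fintype V] (G : SimpleGraph V) : ℚ :=
  (∑ u : V, ∑ v : V, (G.dist u v : ℚ)) / 2

/-- The average distance `μ(G) = W(G) / C(n,2)`. -/
noncomputable def avgDist {V : Type*} [Fintype V] (G : SimpleGraph V) : ℚ :=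
  wiener G / ((Fintype.card V).choose 2 : ℚ)

/-- `a` is the independence number of `G`. -/
def IsIndepNum {V : Type*} (G : SimpleGraph V) (a : ℕ) : Prop :=
  IsGreatest {m | ∃ s : Finset V, s.card = m ∧ ∀ x ∈ s, ∀ y ∈ s, ¬ G.Adj x y} a

/-- The tree `H_{a,b}`: a path on `a` vertices with `⌊b/2⌋` pendent vertices attached to
one end and `⌈b/2⌉` pendent vertices attached to the other end. -/
def Hab (a b : ℕ) : SimpleGraph (Fin (a + b)) :=
  SimpleGraph.fromRel (fun i j =>
    ((i : ℕ) + 1 = (j : ℕ) ∧ (j : ℕ) < a) ∨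
    (a ≤ (i : ℕ) ∧ (i : ℕ) < a + b / 2 ∧ (j : ℕ) = 0) ∨
    (a + b / 2 ≤ (i : ℕ) ∧ (j : ℕ) = a - 1))

lemma keyIneq (k m x : ℚ) (hk23 : k = 2 ∨ (3:ℚ) ≤ k)
    (hm : 0 ≤ m) (hx1 : 1 ≤ x) (hxA : k * x ≤ k + m + 1) :
    x * ((2*k+m) - x) + (x+1) * ((2*k+m) - (x+1)) + (2*k-3) * (2*k+m)^2 / 4
      + (2*k+m) * m
      < (2*k+m) * ((2*k+m) - 1) / 2 * (k + 1/2 + 4 * (k - 1) / k^2) := by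
  have hk : (2:ℚ) ≤ k := by rcases hk23 with h | h <;> linarith
  have hk0 : (0:ℚ) < k := by linarith
  have hb : k + 1/2 + 4 * (k - 1) / k^2 = (4*k^3+2*k^2+16*k-16)/(4*k^2) := by
    field_simp; ring
  rw [hb]
  rw [show (2*k+m) * ((2*k+m) - 1) / 2 * ((4*k^3+2*k^2+16*k-16)/(4*k^2))
      = (2*k+m) * ((2*k+m) - 1) * (4*k^3+2*k^2+16*k-16) / (8*k^2) from by ring]
  rw [lt_div_iff₀ (by positivity : (0:ℚ) < 8*k^2)]
  have h1 : 0 ≤ (k+m+1-k*x) * (k*(2*k+m) - (k+m+1) - k*x) := by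
    apply mul_nonneg
    · linarith
    · nlinarith
  rcases hk23 with h2 | h3
  · subst h2
    nlinarith [sq_nonneg (2*2+m-2*(x+1)), h1, hm, hx1]
  · have h2 : 0 ≤ (k+m+1-k*x) * (k*(2*k+m) - (2*k+m+1) - k*(x+1)) := by
      apply mul_nonneg
      · linarith
      · nlinarith
    nlinarith [h1, h2, mul_nonneg hm (by nlinarith : (0:ℚ) ≤ 6*k^3+3*k^2-24*k+24),
      mul_pos hk0 hk0, mul_pos (mul_pos hk0 hk0) hk0, sq_nonneg (k-3), hm, h3]

lemma cutCount (N a b : ℕ) (ha : a < N) (hb : b < N) :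
    (max a b - min a b : ℕ)
      = ∑ t ∈ range N, ((if a ≤ t ∧ t < b then 1 else 0) + (if b ≤ t ∧ t < a then 1 else 0)) := by
  rw [Finset.sum_add_distrib, ← Finset.card_filter, ← Finset.card_filter]
  have e1 : (range N).filter (fun t => a ≤ t ∧ t < b) = Finset.Ico a b := by
    ext t; simp [Finset.mem_Ico]; omega
  have e2 : (range N).filter (fun t => b ≤ t ∧ t < a) = Finset.Ico b a := by
    ext t; simp [Finset.mem_Ico]; omega
  rw [e1, e2, Nat.card_Ico, Nat.card_Ico]
  omega

lemma prodCount {V : Type*} [Fintype V] (A B : V → Prop) [DecidablePred A] [DecidablePred B] :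
    ∑ u : V, ∑ v : V, (if A u ∧ B v then 1 else 0)
      = (univ.filter A).card * (univ.filter B).card := by
  have h : ∀ u v : V, (if A u ∧ B v then (1:ℕ) else 0)
      = (if A u then 1 else 0) * (if B v then 1 else 0) := by
    intro u v; by_cases h1 : A u <;> by_cases h2 : B v <;> simp [h1, h2]
  simp_rw [h, ← Finset.mul_sum]
  rw [← Finset.sum_mul, Finset.card_filter, Finset.card_filter]

set_option maxHeartbeats 1000000 in
/-- tree from `P_{2k}` with pendent vertices attached to path vertices
other than `v_2`, at most `(n-2k+1)/k` of them at `v_1`. -/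
theorem stmt13 {V : Type*} [Fintype V] (T : SimpleGraph V) (hT : T.IsTree)
    (n k : ℕ) (hk : 2 ≤ k) (hn : 2 * k ≤ n) (hcard : Fintype.card V = n)
    (p : Fin (2 * k) → V) (hinj : Function.Injective p)
    (hpath : ∀ i j, T.Adj (p i) (p j) ↔ ((i : ℕ) + 1 = (j : ℕ) ∨ (j : ℕ) + 1 = (i : ℕ)))
    (hout : ∀ v, (∀ i, v ≠ p i) →
      (T.neighborSet v).ncard = 1 ∧ ∀ u, T.Adj v u → ∃ i, u = p i)
    (hnot2 : ∀ v, (∀ i, v ≠ p i) → ¬ T.Adj v (p ⟨1, by omega⟩))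
    (hv1 : ({v | (∀ i, v ≠ p i) ∧ T.Adj v (p ⟨0, by omega⟩)}.ncard : ℚ) ≤ ((n : ℚ) - 2 * k + 1) / k) :
    avgDist T < (k : ℚ) + 1 / 2 + 4 * ((k : ℚ) - 1) / (k : ℚ) ^ 2 := by
  classical
  have hconn := hT.isConnected
  have hz0lt : 0 < 2*k := by omega
  have hz1lt : 1 < 2*k := by omega
  set z0 : Fin (2*k) := ⟨0, hz0lt⟩ with hz0
  set z1 : Fin (2*k) := ⟨1, hz1lt⟩ with hz1
  -- selection function
  have hsel : ∀ v : V, ∃ i : Fin (2*k),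
      (v = p i) ∨ ((∀ j, v ≠ p j) ∧ T.Adj v (p i) ∧ (i:ℕ) ≠ 1) := by
    intro v
    by_cases h : ∃ i, v = p i
    · obtain ⟨i, hi⟩ := h; exact ⟨i, Or.inl hi⟩
    · push_neg at h
      obtain ⟨h1, h2⟩ := hout v h
      have hne : (T.neighborSet v).Nonempty :=
        Set.nonempty_of_ncard_ne_zero (by omega)
      obtain ⟨u, hu⟩ := hne
      obtain ⟨i, rfl⟩ := h2 u hu
      refine ⟨i, Or.inr ⟨h, hu, ?_⟩⟩
      intro h1'
      exact hnot2 v h (by rwa [show i = ⟨1, by omega⟩ from Fin.ext h1'] at hu)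
  choose f hf using hsel
  have hfp : ∀ i, f (p i) = i := by
    intro i
    rcases hf (p i) with h | h
    · exact (hinj h).symm
    · exact absurd rfl (h.1 i)
  have hfo : ∀ v, (∀ j, v ≠ p j) → T.Adj v (p (f v)) ∧ ((f v : ℕ) ≠ 1) := by
    intro v hv
    rcases hf v with h | h
    · exact absurd h (hv _)
    · exact ⟨h.2.1, h.2.2⟩
  -- distance along the path
  have hd1 : ∀ i j : Fin (2*k), (i:ℕ)+1 = (j:ℕ) → T.dist (p i) (p j) = 1 := by
    intro i j h
    rw [SimpleGraph.dist_eq_one_iff_adj]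
    exact (hpath i j).2 (Or.inl h)
  have hdpathd : ∀ (d : ℕ) (i j : Fin (2*k)), (i:ℕ) + d = (j:ℕ) → T.dist (p i) (p j) ≤ d := by
    intro d
    induction d with
    | zero =>
      intro i j h
      have : i = j := Fin.ext (by omega)
      subst this; simp
    | succ d ih =>
      intro i j h
      have hj' : (i:ℕ) + d < 2*k := by have := j.isLt; omega
      have h1 := ih i ⟨(i:ℕ)+d, hj'⟩ rfl
      have h2 := hd1 ⟨(i:ℕ)+d, hj'⟩ j (by simpa using by omega)
      have h3 := hconn.dist_triangle (u := p i) (v := p ⟨(i:ℕ)+d, hj'⟩) (w := p j)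
      omega
  have hdp : ∀ i j : Fin (2*k), T.dist (p i) (p j) ≤ max (i:ℕ) (j:ℕ) - min (i:ℕ) (j:ℕ) := by
    intro i j
    rcases le_total (i:ℕ) (j:ℕ) with h | h
    · have := hdpathd ((j:ℕ) - (i:ℕ)) i j (by omega); omega
    · have := hdpathd ((i:ℕ) - (j:ℕ)) j i (by omega)
      rw [SimpleGraph.dist_comm] at this; omega
  -- pos and epsilon
  set pos : V → ℕ := fun v => (f v : ℕ) with hposdef
  set ε : V → ℕ := fun v => if (∀ j, v ≠ p j) then 1 else 0 with hεdef
  have hposlt : ∀ v, pos v < 2*k := fun v => (f v).isLt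
  have hεval1 : ∀ v, (∀ j, v ≠ p j) → ε v = 1 := by
    intro v hv; simp only [hεdef]; exact if_pos hv
  have hεval0 : ∀ i, ε (p i) = 0 := by
    intro i; simp only [hεdef]
    exact if_neg (by push_neg; exact ⟨i, rfl⟩)
  have hde : ∀ v, T.dist v (p (f v)) ≤ ε v := by
    intro v
    by_cases hv : ∀ j, v ≠ p j
    · have h1 := (hfo v hv).1
      rw [hεval1 v hv, SimpleGraph.dist_eq_one_iff_adj.2 h1]
    · push_neg at hv
      obtain ⟨j, rfl⟩ := hv
      have hz : T.dist (p j) (p (f (p j))) = 0 := by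
        rw [hfp]; exact SimpleGraph.dist_self
      rw [hz]
      exact Nat.zero_le _
  have hdub : ∀ u v : V, T.dist u v
      ≤ (max (pos u) (pos v) - min (pos u) (pos v)) + ε u + ε v := by
    intro u v
    have t1 := hconn.dist_triangle (u := u) (v := p (f u)) (w := v)
    have t2 := hconn.dist_triangle (u := p (f u)) (v := p (f v)) (w := v)
    have d1 := hde u
    have d2 := hde v
    rw [SimpleGraph.dist_comm (u := p (f v)) (v := v)] at t2
    have dp := hdp (f u) (f v)
    simp only [hposdef]
    omega
  -- counts
  set L : ℕ → ℕ := fun t => (univ.filter (fun u => pos u ≤ t)).card with hLdef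
  have hLle : ∀ t, L t ≤ n := by
    intro t
    calc L t ≤ (univ : Finset V).card := card_filter_le _ _
    _ = n := by rw [card_univ, hcard]
  have hLcompl : ∀ t, (univ.filter (fun v => t < pos v)).card = n - L t := by
    intro t
    have h1 := Finset.card_filter_add_card_filter_not
      (s := (univ : Finset V)) (p := fun v => pos v ≤ t)
    have h2 : (univ.filter (fun v => ¬ pos v ≤ t)) = univ.filter (fun v => t < pos v) := by
      apply Finset.filter_congr; intro v _; simp [not_le]
    rw [h2, card_univ, hcard] at h1
    simp only [hLdef]
    omega
  set M : ℕ := (univ.filter (fun v => ∀ j, v ≠ p j)).card with hMdef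
  have hM : M = n - 2*k := by
    have h1 := Finset.card_filter_add_card_filter_not
      (s := (univ : Finset V)) (p := fun v => ∀ j, v ≠ p j)
    have h2 : (univ.filter (fun v => ¬ ∀ j, v ≠ p j)) = univ.image p := by
      ext v
      simp only [mem_filter, mem_univ, true_and, mem_image]
      push_neg
      constructor
      · rintro ⟨j, hj⟩; exact ⟨j, hj.symm⟩
      · rintro ⟨j, hj⟩; exact ⟨j, hj.symm⟩
    have h3 : (univ.image p).card = 2*k := by
      rw [Finset.card_image_of_injective _ hinj, card_univ, Fintype.card_fin]
    rw [h2, h3, card_univ, hcard] at h1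
    omega
  have hεsum : ∑ v : V, ε v = M := by
    simp only [hεdef, hMdef, Finset.sum_boole, Nat.cast_id]
  -- the big sum bound
  set SN : ℕ := ∑ u : V, ∑ v : V, T.dist u v with hSNdef
  have hSN1 : SN ≤ (∑ u : V, ∑ v : V,
      (max (pos u) (pos v) - min (pos u) (pos v))) + n*M + n*M := by
    have step : SN ≤ ∑ u : V, ∑ v : V,
        ((max (pos u) (pos v) - min (pos u) (pos v)) + ε u + ε v) :=
      Finset.sum_le_sum fun u _ => Finset.sum_le_sum fun v _ => hdub u v
    have inner : ∀ u : V, ∑ v : V,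
        ((max (pos u) (pos v) - min (pos u) (pos v)) + ε u + ε v)
        = (∑ v : V, (max (pos u) (pos v) - min (pos u) (pos v))) + n * ε u + M := by
      intro u
      rw [Finset.sum_add_distrib, Finset.sum_add_distrib, Finset.sum_const, hεsum,
        card_univ, hcard, smul_eq_mul]
    rw [Finset.sum_congr rfl fun u _ => inner u] at step
    rw [Finset.sum_add_distrib, Finset.sum_add_distrib, ← Finset.mul_sum, hεsum,
      Finset.sum_const, card_univ, hcard, smul_eq_mul] at step
    omega
  have hcutsum : (∑ u : V, ∑ v : V, (max (pos u) (pos v) - min (pos u) (pos v)))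
      = ∑ t ∈ range (2*k), (L t * (n - L t) + (n - L t) * L t) := by
    have percut : ∀ u v : V, (max (pos u) (pos v) - min (pos u) (pos v))
        = ∑ t ∈ range (2*k), ((if pos u ≤ t ∧ t < pos v then 1 else 0)
            + (if pos v ≤ t ∧ t < pos u then 1 else 0)) :=
      fun u v => cutCount (2*k) (pos u) (pos v) (hposlt u) (hposlt v)
    rw [Finset.sum_congr rfl fun u _ => Finset.sum_congr rfl fun v _ => percut u v]
    rw [Finset.sum_congr rfl fun u (_ : u ∈ univ) => Finset.sum_comm]
    rw [Finset.sum_comm]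
    refine Finset.sum_congr rfl fun t _ => ?_
    rw [Finset.sum_comm]
    have split : ∑ u : V, ∑ v : V,
        ((if pos u ≤ t ∧ t < pos v then 1 else 0)
          + (if pos v ≤ t ∧ t < pos u then 1 else 0))
        = (∑ u : V, ∑ v : V, (if pos u ≤ t ∧ t < pos v then 1 else 0))
          + (∑ u : V, ∑ v : V, (if pos v ≤ t ∧ t < pos u then 1 else 0)) := by
      rw [← Finset.sum_add_distrib]
      refine Finset.sum_congr rfl fun u _ => ?_
      rw [← Finset.sum_add_distrib]
    rw [Finset.sum_comm] at split
    rw [split]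
    have c1 : (∑ u : V, ∑ v : V, (if pos u ≤ t ∧ t < pos v then 1 else 0))
        = L t * (n - L t) := by
      rw [prodCount (fun u => pos u ≤ t) (fun v => t < pos v), hLcompl t]
    have c2 : (∑ u : V, ∑ v : V, (if pos v ≤ t ∧ t < pos u then 1 else 0))
        = (n - L t) * L t := by
      have : ∀ u v : V, (if pos v ≤ t ∧ t < pos u then (1:ℕ) else 0)
          = (if t < pos u ∧ pos v ≤ t then 1 else 0) := by
        intro u v; by_cases h1 : pos v ≤ t <;> by_cases h2 : t < pos u <;> simp [h1, h2]
      simp_rw [this]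
      rw [prodCount (fun u => t < pos u) (fun v => pos v ≤ t), hLcompl t]
    rw [c1, c2]
  -- values of L at 0, 1, top
  set a1 : ℕ := (univ.filter (fun v => (∀ i, v ≠ p i) ∧ T.Adj v (p z0))).card with ha1
  have hposz : ∀ (v : V) (i : Fin (2*k)), pos v = (i:ℕ) →
      (v = p i ∨ ((∀ j, v ≠ p j) ∧ T.Adj v (p i))) := by
    intro v i hpv
    have hfv : f v = i := Fin.ext hpv
    rcases hf v with h | h
    · left; rw [h, hfv]
    · right; refine ⟨h.1, ?_⟩; rw [← hfv]; exact h.2.1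
  have hL0 : L 0 = a1 + 1 := by
    have hset : univ.filter (fun u => pos u ≤ 0)
        = insert (p z0) (univ.filter (fun v => (∀ i, v ≠ p i) ∧ T.Adj v (p z0))) := by
      ext v
      simp only [mem_filter, mem_univ, true_and, mem_insert, Nat.le_zero]
      constructor
      · intro h
        rcases hposz v z0 (by simpa using h) with h' | h'
        · exact Or.inl h'
        · exact Or.inr h'
      · rintro (rfl | ⟨hv, hadj⟩)
        · show pos (p z0) = 0
          simp only [hposdef]
          rw [hfp]
        · have h1 := (hfo v hv).1
          obtain ⟨w, hw⟩ := Set.ncard_eq_one.mp (hout v hv).1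
          have e1 : p (f v) = w := by
            have : p (f v) ∈ T.neighborSet v := h1
            rw [hw] at this
            exact this
          have e2 : p z0 = w := by
            have : p z0 ∈ T.neighborSet v := hadj
            rw [hw] at this
            exact this
          have hfz : f v = z0 := hinj (e1.trans e2.symm)
          show pos v = 0
          simp only [hposdef, hfz]
          rfl
    have hnm : p z0 ∉ univ.filter (fun v => (∀ i, v ≠ p i) ∧ T.Adj v (p z0)) := by
      simp only [mem_filter, mem_univ, true_and, not_and]
      intro h
      exact absurd rfl (h z0)
    simp only [hLdef]
    rw [hset, Finset.card_insert_of_notMem hnm, ha1]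
  have hL1 : L 1 = L 0 + 1 := by
    have hset : univ.filter (fun u => pos u ≤ 1)
        = insert (p z1) (univ.filter (fun v => pos v ≤ 0)) := by
      ext v
      simp only [mem_filter, mem_univ, true_and, mem_insert]
      constructor
      · intro h
        rcases Nat.lt_or_ge (pos v) 1 with h' | h'
        · exact Or.inr (by omega)
        · have h1 : pos v = 1 := by omega
          rcases hposz v z1 (by simpa using h1) with h'' | h''
          · exact Or.inl h''
          · exact absurd h1 (hfo v h''.1).2
      · rintro (rfl | h)
        · show pos (p z1) ≤ 1
          simp only [hposdef]
          rw [hfp]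
        · omega
    have hnm : p z1 ∉ univ.filter (fun v => pos v ≤ 0) := by
      simp only [mem_filter, mem_univ, true_and]
      show ¬ pos (p z1) ≤ 0
      simp only [hposdef]
      rw [hfp]
      simp [hz1]
    simp only [hLdef]
    rw [hset, Finset.card_insert_of_notMem hnm]
  have hLtop : L (2*k - 1) = n := by
    have hset : univ.filter (fun u => pos u ≤ 2*k - 1) = univ := by
      apply Finset.filter_true_of_mem
      intro v _
      have := hposlt v
      omega
    simp only [hLdef]
    rw [hset, card_univ, hcard]
  -- pass to ℚ
  rw [hcutsum] at hSN1
  have hcastsum : ((∑ t ∈ range (2*k), (L t * (n - L t) + (n - L t) * L t) : ℕ) : ℚ)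
      = ∑ t ∈ range (2*k), ((L t : ℚ) * ((n:ℚ) - (L t : ℚ)) + ((n:ℚ) - (L t : ℚ)) * (L t : ℚ)) := by
    rw [Nat.cast_sum]
    refine Finset.sum_congr rfl fun t _ => ?_
    push_cast [Nat.cast_sub (hLle t)]
    ring
  have hSNQ : (SN : ℚ) ≤ (∑ t ∈ range (2*k),
      ((L t : ℚ) * ((n:ℚ) - (L t : ℚ)) + ((n:ℚ) - (L t : ℚ)) * (L t : ℚ)))
      + (n:ℚ)*(M:ℚ) + (n:ℚ)*(M:ℚ) := by
    calc (SN:ℚ) ≤ ((∑ t ∈ range (2*k), (L t * (n - L t) + (n - L t) * L t)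
          + n*M + n*M : ℕ) : ℚ) := Nat.cast_le.mpr hSN1
    _ = _ := by rw [Nat.cast_add, Nat.cast_add, hcastsum]; push_cast; ring
  -- split the sum
  set G : ℕ → ℚ := fun t =>
    (L t : ℚ) * ((n:ℚ) - (L t : ℚ)) + ((n:ℚ) - (L t : ℚ)) * (L t : ℚ) with hGdef
  have hsplit : ∑ t ∈ range (2*k), G t
      = G 0 + G 1 + ∑ t ∈ Finset.Ico 2 (2*k), G t := by
    have e : range (2*k) = insert 0 (insert 1 (Finset.Ico 2 (2*k))) := by
      ext t; simp [Finset.mem_Ico, Finset.mem_range]; omega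
    rw [e, Finset.sum_insert (by simp), Finset.sum_insert (by simp)]
    ring
  have htopsplit : ∑ t ∈ Finset.Ico 2 (2*k), G t
      = (∑ t ∈ Finset.Ico 2 (2*k - 1), G t) + G (2*k - 1) := by
    have e : Finset.Ico 2 (2*k) = Finset.Ico 2 ((2*k - 1) + 1) := by
      congr 1; omega
    rw [e, Finset.sum_Ico_succ_top (by omega)]
  have hGtop : G (2*k - 1) = 0 := by
    simp only [hGdef, hLtop]
    ring
  have hmid : ∑ t ∈ Finset.Ico 2 (2*k - 1), G t ≤ ((2*k - 3 : ℕ) : ℚ) * ((n:ℚ)^2 / 2) := by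
    have := Finset.sum_le_card_nsmul (Finset.Ico 2 (2*k - 1)) G ((n:ℚ)^2 / 2)
      (fun t _ => by
        simp only [hGdef]
        nlinarith [sq_nonneg ((n:ℚ) - 2 * (L t : ℚ))])
    rw [Nat.card_Ico] at this
    rw [show (2*k - 1 - 2 : ℕ) = 2*k - 3 from by omega] at this
    rwa [nsmul_eq_mul] at this
  -- set up keyIneq
  have hk0Q : (0:ℚ) < (k:ℚ) := by
    have : (2:ℚ) ≤ (k:ℚ) := by exact_mod_cast hk
    linarith
  have hk23 : (k:ℚ) = 2 ∨ (3:ℚ) ≤ (k:ℚ) := by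
    rcases eq_or_lt_of_le hk with h | h
    · left; exact_mod_cast h.symm
    · right; exact_mod_cast h
  set mq : ℚ := (n:ℚ) - 2*(k:ℚ) with hmq
  have hmnn : 0 ≤ mq := by
    have : (2*k : ℚ) ≤ (n:ℚ) := by exact_mod_cast hn
    rw [hmq]; push_cast at this ⊢; linarith
  set x : ℚ := ((L 0 : ℕ) : ℚ) with hx
  have hx1 : 1 ≤ x := by
    rw [hx, hL0]; push_cast; linarith [Nat.cast_nonneg (α := ℚ) a1]
  have ha1v : ((a1 : ℕ) : ℚ) ≤ ((n : ℚ) - 2 * k + 1) / k := by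
    have hh : ({v | (∀ i, v ≠ p i) ∧ T.Adj v (p z0)}.ncard : ℚ)
        ≤ ((n : ℚ) - 2 * k + 1) / k := hv1
    have hsetq : {v | (∀ i, v ≠ p i) ∧ T.Adj v (p z0)}
        = (↑(univ.filter (fun v => (∀ i, v ≠ p i) ∧ T.Adj v (p z0))) : Set V) := by
      ext v
      simp only [Finset.coe_filter, Set.mem_setOf_eq, mem_univ, true_and]
    rw [hsetq, Set.ncard_coe_finset, ← ha1] at hh
    exact hh
  have hxA : (k:ℚ) * x ≤ (k:ℚ) + mq + 1 := by
    rw [le_div_iff₀ hk0Q] at ha1v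
    rw [hx, hL0, hmq]
    push_cast
    nlinarith [ha1v]
  have key := keyIneq (k:ℚ) mq x hk23 hmnn hx1 hxA
  have hNn : 2*(k:ℚ) + mq = (n:ℚ) := by rw [hmq]; ring
  rw [hNn] at key
  -- G values
  have hG0 : G 0 = 2 * (x * ((n:ℚ) - x)) := by
    simp only [hGdef, hx]; ring
  have hG1 : G 1 = 2 * ((x+1) * ((n:ℚ) - (x+1))) := by
    simp only [hGdef]
    rw [hL1]
    push_cast [hx]
    ring
  have hMq : (M:ℚ) = mq := by
    rw [hM, hmq, Nat.cast_sub hn]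
    push_cast
    ring
  have hcast23 : ((2*k - 3 : ℕ) : ℚ) = 2*(k:ℚ) - 3 := by
    have : (3:ℕ) ≤ 2*k := by omega
    push_cast [Nat.cast_sub this]
    ring
  -- final assembly
  clear_value SN M L G x mq
  have hfin : (SN : ℚ) < (n:ℚ) * ((n:ℚ) - 1) * ((k : ℚ) + 1 / 2 + 4 * ((k : ℚ) - 1) / (k : ℚ) ^ 2) := by
    have hb1 : (SN : ℚ) ≤ G 0 + G 1 + (∑ t ∈ Finset.Ico 2 (2*k - 1), G t) + G (2*k - 1)
        + (n:ℚ)*(M:ℚ) + (n:ℚ)*(M:ℚ) := by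
      calc (SN : ℚ) ≤ (∑ t ∈ range (2*k), G t) + (n:ℚ)*(M:ℚ) + (n:ℚ)*(M:ℚ) := hSNQ
      _ = G 0 + G 1 + (∑ t ∈ Finset.Ico 2 (2*k - 1), G t) + G (2*k - 1)
          + (n:ℚ)*(M:ℚ) + (n:ℚ)*(M:ℚ) := by rw [hsplit, htopsplit]; ring
    rw [hG0, hG1, hGtop, hMq] at hb1
    rw [hcast23] at hmid
    linarith [key, hmid, hb1]
  -- conclude
  have hn4 : (4:ℚ) ≤ (n:ℚ) := by exact_mod_cast (by omega : 4 ≤ n)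
  have hCpos : (0:ℚ) < (n:ℚ) * ((n:ℚ) - 1) / 2 := by nlinarith
  have hWq : wiener T = (SN : ℚ) / 2 := by
    rw [wiener, hSNdef]
    push_cast
    rfl
  rw [avgDist, hcard, Nat.cast_choose_two, hWq, div_lt_iff₀ hCpos]
  calc (SN : ℚ) / 2 < (n:ℚ) * ((n:ℚ) - 1) * ((k : ℚ) + 1 / 2 + 4 * ((k : ℚ) - 1) / (k : ℚ) ^ 2) / 2 := by
        linarith
  _ = ((k : ℚ) + 1 / 2 + 4 * ((k : ℚ) - 1) / (k : ℚ) ^ 2) * ((n:ℚ) * ((n:ℚ) - 1) / 2) := by ring
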